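/- Let A = (A_1, …, A_n) be an allocation whose envy graph G_A contains no positive-weight cycle. For each agent i, let p_i be the maximum weight of a (simple) path starting at vertex i in G_A (taking the empty path, of weight 0, as allowed). Then p_i ≥ 0 for all i and the pair (A, p) is envy-free: v_i(A_i) + p_i ≥ v_i(A_j) + p_j for all i, j ∈ [n]. -/

import Mathlib

/-- The total weight of the closed walk (cycle) visiting the vertices of `l` in
order and returning to the start. -/
def cycleWeight {n : ℕ} (w : Fin n → Fin n → ℝ) (l : List (Fin n)) : ℝ :=
  ((l.zip (l.rotate 1)).map fun q => w q.1 q.2).sum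

/-- The total weight of the path visiting the vertices of `l` in order
(the empty or one-vertex path has weight `0`). -/
def pathWeight {n : ℕ} (w : Fin n → Fin n → ℝ) (l : List (Fin n)) : ℝ :=
  ((l.zip l.tail).map fun q => w q.1 q.2).sum

/-- **Maximum-path payments are envy-free (Halpern–Shah).**
Let `A` be an allocation whose envy graph (arc weights
`w i j = v i (A j) - v i (A i)`) has no positive-weight cycle. If for each
agent `i`, `p i` is the maximum weight of a simple path starting at `i`
(the one-vertex path, of weight `0`, being allowed), then `p i ≥ 0` for all `i`
and `(A, p)` is envy-free: `v i (A i) + p i ≥ v i (A j) + p j` for all `i, j`. -/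
lemma pw_nil {n : ℕ} (w : Fin n → Fin n → ℝ) : pathWeight w [] = 0 := by simp [pathWeight]

lemma pw_single {n : ℕ} (w : Fin n → Fin n → ℝ) (a : Fin n) : pathWeight w [a] = 0 := by
  simp [pathWeight]

lemma pw_cons_cons {n : ℕ} (w : Fin n → Fin n → ℝ) (a b : Fin n) (l : List (Fin n)) :
    pathWeight w (a :: b :: l) = w a b + pathWeight w (b :: l) := by
  simp [pathWeight]

lemma pw_split {n : ℕ} (w : Fin n → Fin n → ℝ) (l1 : List (Fin n)) (a : Fin n)
    (l2 : List (Fin n)) :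
    pathWeight w (l1 ++ a :: l2) = pathWeight w (l1 ++ [a]) + pathWeight w (a :: l2) := by
  induction l1 with
  | nil => simp [pw_single]
  | cons b l1 ih =>
    cases l1 with
    | nil => simp [pw_cons_cons, pw_single]
    | cons c l1' =>
      simp only [List.cons_append, pw_cons_cons] at *
      rw [ih]; ring

lemma cw_eq_pw {n : ℕ} (w : Fin n → Fin n → ℝ) (x : Fin n) (c : List (Fin n)) :
    cycleWeight w (x :: c) = pathWeight w (x :: (c ++ [x])) := by
  simp only [cycleWeight, pathWeight, List.rotate_cons_succ, List.rotate_zero, List.tail_cons]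
  congr 2
  have key : ∀ (l r s : List (Fin n)), r.length ≤ l.length → (l ++ s).zip r = l.zip r := by
    intro l
    induction l with
    | nil => intro r s h; simp at h; simp [h]
    | cons a l ih =>
      intro r s h
      cases r with
      | nil => simp
      | cons b r => simpa using ih r s (by simpa using h)
  have := key (x :: c) (c ++ [x]) [x] (by simp)
  simpa using this.symm

theorem max_path_payments_envy_free
    {α : Type*} [Fintype α] [DecidableEq α] {n : ℕ}
    (v : Fin n → Finset α → ℝ) (A : Fin n → Finset α)
    (hdisj : ∀ i j : Fin n, i ≠ j → Disjoint (A i) (A j))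
    (hcover : ∀ x : α, ∃ i : Fin n, x ∈ A i)
    (hnocycle : ∀ l : List (Fin n), l ≠ [] → l.Nodup →
      cycleWeight (fun i j => v i (A j) - v i (A i)) l ≤ 0)
    (p : Fin n → ℝ)
    (hp : ∀ i : Fin n,
      IsGreatest {x : ℝ | ∃ l : List (Fin n), l.Nodup ∧ l.head? = some i ∧
        pathWeight (fun i j => v i (A j) - v i (A i)) l = x} (p i)) :
    (∀ i, 0 ≤ p i) ∧
    (∀ i j : Fin n, v i (A j) + p j ≤ v i (A i) + p i) := by
  
  set w : Fin n → Fin n → ℝ := fun i j => v i (A j) - v i (A i) with hw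
  have hub : ∀ i : Fin n, ∀ l : List (Fin n), l.Nodup → l.head? = some i →
      pathWeight w l ≤ p i := by
    intro i l h1 h2
    exact (hp i).2 ⟨l, h1, h2, rfl⟩
  have hp0 : ∀ i, 0 ≤ p i := by
    intro i
    have := hub i [i] (by simp) (by simp)
    rw [pw_single] at this
    linarith
  refine ⟨hp0, ?_⟩
  intro i j
  obtain ⟨l, hnd, hhead, hpw⟩ := (hp j).1
  suffices h : w i j + p j ≤ p i by
    have : w i j = v i (A j) - v i (A i) := rfl
    linarith
  obtain ⟨l', rfl⟩ : ∃ l', l = j :: l' := by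
    cases l with
    | nil => simp at hhead
    | cons a l' =>
      simp only [List.head?_cons, Option.some.injEq] at hhead
      exact ⟨l', by rw [hhead]⟩
  by_cases hi : i ∈ j :: l'
  · obtain ⟨l1, l2, heq⟩ := List.append_of_mem hi
    rw [heq] at hnd hpw
    have hnd2 : (i :: l2).Nodup := hnd.sublist (List.sublist_append_right l1 (i :: l2))
    have hnd1 : (i :: l1).Nodup := by
      have := hnd
      rw [List.nodup_append] at this
      refine List.nodup_cons.mpr ⟨fun hmem => ?_, this.1⟩
      exact this.2.2 i hmem i (by simp) rfl
    have hcyc : cycleWeight w (i :: l1) ≤ 0 :=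
      hnocycle (i :: l1) (by simp) hnd1
    have hpath : pathWeight w (i :: l2) ≤ p i := hub i (i :: l2) hnd2 (by simp)
    have hsplit : pathWeight w (l1 ++ i :: l2)
        = pathWeight w (l1 ++ [i]) + pathWeight w (i :: l2) := pw_split w l1 i l2
    have hkey : w i j + pathWeight w (l1 ++ [i]) = cycleWeight w (i :: l1) := by
      rw [cw_eq_pw]
      cases l1 with
      | nil =>
        have : j = i := by
          have h := heq
          simp only [List.nil_append, List.cons.injEq] at h
          exact h.1
        subst this
        simp [pw_single, pw_cons_cons, hw]
      | cons a l1' =>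
        have haj : a = j := by
          have := heq
          simp at this
          exact this.1.symm
        subst haj
        simp [List.cons_append, pw_cons_cons]
    rw [← hpw, hsplit]
    linarith
  · have hndi : (i :: j :: l').Nodup := List.nodup_cons.mpr ⟨hi, hnd⟩
    have := hub i (i :: j :: l') hndi (by simp)
    rw [pw_cons_cons, hpw] at this
    exact this
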